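/- Let g : [0,1] → ℝ be concave with g(0) = 0, and let η(x) = -x log x for x > 0 with η(0) = 0. Then for every integer k > 1, the limsup as x → 0⁺ of g(x)/η(x) equals the limsup as n → ∞ of g(k^{-n})/η(k^{-n}). -/

import Mathlib

noncomputable def eta (x : ℝ) : ℝ := -x * Real.log x

open Filter Set

/-- slope monotonicity from concavity -/
lemma slope_le {g : ℝ → ℝ} (hconc : ConcaveOn ℝ (Set.Icc 0 1) g) (h0 : g 0 = 0)
    {x y : ℝ} (hy : 0 < y) (hyx : y ≤ x) (hx1 : x ≤ 1) :
    g x / x ≤ g y / y := by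
  have hx : 0 < x := lt_of_lt_of_le hy hyx
  have ha : (0:ℝ) ≤ y / x := by positivity
  have hb : (0:ℝ) ≤ 1 - y / x := by
    have : y / x ≤ 1 := (div_le_one hx).2 hyx
    linarith
  have hmem : x ∈ Set.Icc (0:ℝ) 1 := ⟨hx.le, hx1⟩
  have hmem0 : (0:ℝ) ∈ Set.Icc (0:ℝ) 1 := ⟨le_refl _, zero_le_one⟩
  have h := hconc.2 hmem hmem0 ha hb (by ring)
  simp only [smul_eq_mul, mul_zero, add_zero, h0] at h
  have hyx' : y / x * x = y := div_mul_cancel₀ y hx.ne'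
  rw [hyx'] at h
  rw [div_le_div_iff₀ hx hy]
  calc g x * y = (y / x * g x) * x := by field_simp
    _ ≤ g y * x := by nlinarith [h, hx.le]

/-- ratio rewriting -/
lemma ratio_eq {g : ℝ → ℝ} {x : ℝ} (hx : 0 < x) :
    g x / eta x = (g x / x) / (-Real.log x) := by
  rw [eta, div_div]
  congr 1
  ring

theorem limsup_ratio_along_powers (g : ℝ → ℝ)
    (hconc : ConcaveOn ℝ (Set.Icc 0 1) g) (h0 : g 0 = 0)
    (hlim : Filter.Tendsto g (nhdsWithin 0 (Set.Ioi 0)) (nhds 0))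
    (k : ℕ) (hk : 1 < k) :
    Filter.limsup (fun x : ℝ => ((g x / eta x : ℝ) : EReal))
        (nhdsWithin 0 (Set.Ioo 0 1))
      = Filter.limsup
          (fun n : ℕ => ((g (((k:ℝ)^n)⁻¹) / eta (((k:ℝ)^n)⁻¹) : ℝ) : EReal))
          Filter.atTop := by
  have hk1 : (1:ℝ) < (k:ℝ) := by exact_mod_cast hk
  have hkpos : (0:ℝ) < k := by positivity
  set F : Filter ℝ := nhdsWithin 0 (Set.Ioo 0 1) with hF
  have hFneBot : F.NeBot := by
    apply mem_closure_iff_nhdsWithin_neBot.mp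
    rw [closure_Ioo (by norm_num : (0:ℝ) ≠ 1)]
    exact ⟨le_refl _, zero_le_one⟩
  set f : ℝ → EReal := fun x : ℝ => ((g x / eta x : ℝ) : EReal) with hf
  set m : ℕ → ℝ := fun n => ((k:ℝ)^n)⁻¹ with hm
  have hmpos : ∀ n, 0 < m n := fun n => by positivity
  have hmanti : ∀ {a b : ℕ}, a ≤ b → m b ≤ m a := by
    intro a b hab
    apply inv_anti₀ (by positivity)
    exact pow_le_pow_right₀ hk1.le hab
  -- the sequence tends to 0 within Ioo 0 1
  have hmt : Tendsto m atTop F := by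
    rw [hF, tendsto_nhdsWithin_iff]
    constructor
    · exact tendsto_inv_atTop_zero.comp (tendsto_pow_atTop_atTop_of_one_lt hk1)
    · filter_upwards [Filter.eventually_ge_atTop 1] with n hn
      refine ⟨hmpos n, ?_⟩
      rw [inv_lt_one_iff₀]
      right
      exact one_lt_pow₀ hk1 (by omega)
  have hmap : Filter.limsup (fun n : ℕ => f (m n)) atTop
      = Filter.limsup f (Filter.map m atTop) := by
    rw [Filter.limsup, Filter.limsup, Filter.map_map]; rfl
  -- easy direction : RHS ≤ LHS
  have hge : Filter.limsup (fun n : ℕ => f (m n)) atTop ≤ Filter.limsup f F := by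
    rw [hmap]
    exact Filter.limsup_le_limsup_of_le hmt
  -- main case split
  by_cases hB : ∃ M : ℝ, ∀ x ∈ Set.Ioo (0:ℝ) 1, g x / x ≤ M
  · -- bounded slopes : both limsups are 0
    obtain ⟨M, hM⟩ := hB
    set C : ℝ := max |M| |g 1| with hC
    have habs : ∀ x ∈ Set.Ioo (0:ℝ) 1, |g x / x| ≤ C := by
      intro x hx
      rw [abs_le]
      constructor
      · have h1 : g 1 / 1 ≤ g x / x := slope_le hconc h0 hx.1 hx.2.le le_rfl
        rw [div_one] at h1
        have : -C ≤ g 1 := by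
          have := neg_abs_le (g 1)
          have : -C ≤ -|g 1| := neg_le_neg (le_max_right _ _)
          linarith [neg_abs_le (g 1)]
        linarith
      · exact le_trans (hM x hx) (le_trans (le_abs_self M) (le_max_left _ _))
    have hbound : ∀ᶠ x in F, ‖g x / eta x‖ ≤ C * (-Real.log x)⁻¹ := by
      filter_upwards [self_mem_nhdsWithin] with x hx
      have hx0 : (0:ℝ) < x := hx.1
      have hlog : 0 < -Real.log x := by
        have := Real.log_neg hx0 hx.2
        linarith
      rw [ratio_eq hx0, Real.norm_eq_abs, abs_div, abs_of_pos hlog,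
        div_eq_mul_inv]
      exact mul_le_mul_of_nonneg_right (habs x hx) (by positivity)
    have htz : Tendsto (fun x : ℝ => C * (-Real.log x)⁻¹) F (nhds 0) := by
      have hlogtop : Tendsto (fun x : ℝ => -Real.log x) F atTop := by
        apply Tendsto.comp tendsto_neg_atBot_atTop
        exact Real.tendsto_log_nhdsGT_zero.mono_left
          (nhdsWithin_mono 0 Set.Ioo_subset_Ioi_self)
      have := (tendsto_inv_atTop_zero.comp hlogtop).const_mul C
      simpa using this
    have htendsto : Tendsto (fun x => g x / eta x) F (nhds 0) :=
      squeeze_zero_norm' hbound htz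
    have htE : Tendsto f F (nhds (0:EReal)) := by
      have : Tendsto (fun x => ((g x / eta x : ℝ) : EReal)) F (nhds ((0:ℝ):EReal)) :=
        (continuous_coe_real_ereal.tendsto _).comp htendsto
      simpa using this
    have h1 : Filter.limsup f F = 0 := htE.limsup_eq
    have h2 : Filter.limsup (fun n : ℕ => f (m n)) atTop = 0 :=
      (htE.comp hmt).limsup_eq
    rw [h1, h2]
  · -- unbounded slopes
    push_neg at hB
    obtain ⟨x0, hx0mem, hx0pos⟩ := hB 0
    have hposs : ∀ y : ℝ, 0 < y → y ≤ x0 → 0 < g y / y := fun y hy hyx =>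
      lt_of_lt_of_le hx0pos (slope_le hconc h0 hy hyx hx0mem.2.le)
    set L := Filter.limsup (fun n : ℕ => f (m n)) atTop with hL
    -- L ≥ 0
    have hmlt : ∀ᶠ n in atTop, m n < x0 := by
      have : Tendsto m atTop (nhds 0) := hmt.mono_right nhdsWithin_le_nhds
      exact this.eventually_lt_const hx0mem.1
    have hL0 : (0:EReal) ≤ L := by
      have hev : ∀ᶠ n in atTop, (0:EReal) ≤ f (m n) := by
        filter_upwards [hmlt, Filter.eventually_ge_atTop 1] with n hn hn1
        have hmn1 : m n < 1 := lt_trans hn hx0mem.2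
        have hlog : 0 < -Real.log (m n) := by
          have := Real.log_neg (hmpos n) hmn1
          linarith
        have : 0 < g (m n) / eta (m n) := by
          rw [ratio_eq (hmpos n)]
          exact div_pos (hposs _ (hmpos n) hn.le) hlog
        show (0:EReal) ≤ ((g (m n) / eta (m n) : ℝ) : EReal)
        exact_mod_cast this.le
      calc (0:EReal) = Filter.limsup (fun _ : ℕ => (0:EReal)) atTop :=
            (Filter.limsup_const _).symm
        _ ≤ L := Filter.limsup_le_limsup hev
    -- hard direction
    refine le_antisymm ?_ hge
    apply le_of_forall_gt_imp_ge_of_dense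
    intro c hc
    obtain ⟨c', hc'1, hc'2⟩ := EReal.exists_between_coe_real hc
    obtain ⟨c'', hc''1, hc''2⟩ := EReal.exists_between_coe_real hc'2
    have hc'pos : (0:ℝ) < c' := by
      have : (0:EReal) < (c' : EReal) := lt_of_le_of_lt hL0 hc'1
      exact_mod_cast this
    have hc'c'' : c' < c'' := by exact_mod_cast hc''1
    -- eventually the sequence beats c'
    have hNr : ∀ᶠ n in atTop, f (m n) < (c' : EReal) :=
      Filter.eventually_lt_of_limsup_lt hc'1
    obtain ⟨N, hN⟩ := Filter.eventually_atTop.mp hNr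
    obtain ⟨N0, hN0⟩ := Filter.eventually_atTop.mp hmlt
    set N' : ℕ := ⌈c' / (c'' - c')⌉₊ + 1 with hN'
    set N'' : ℕ := max (max N N') (max N0 1) with hN''
    -- the bound on the eventual set
    refine Filter.limsup_le_of_le (by isBoundedDefault) ?_
    have h1 : ∀ᶠ x in F, x ∈ Set.Ioo (0:ℝ) 1 := self_mem_nhdsWithin
    have h2 : ∀ᶠ x in F, x < m N'' :=
      (gt_mem_nhds (hmpos N'')).filter_mono nhdsWithin_le_nhds
    filter_upwards [h1, h2] with x hx hxlt
    have hx0' : (0:ℝ) < x := hx.1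
    have hxinv : (1:ℝ) ≤ x⁻¹ := one_le_inv_iff₀.mpr ⟨hx0', hx.2.le⟩
    obtain ⟨n, hn1, hn2⟩ := exists_nat_pow_near hxinv hk1
    -- n ≥ N''
    have hnN : N'' ≤ n := by
      have hkx : (k:ℝ)^N'' < x⁻¹ := by
        rw [hm] at hxlt
        exact (lt_inv_comm₀ hx0' (by positivity)).mp hxlt
      have : (k:ℝ)^N'' < (k:ℝ)^(n+1) := lt_trans hkx hn2
      have := (pow_lt_pow_iff_right₀ hk1).mp this
      omega
    have hnN1 : 1 ≤ n := le_trans (le_trans (le_max_right N0 1) (le_max_right _ _)) hnN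
    have hnNN : N ≤ n := le_trans (le_trans (le_max_left N N') (le_max_left _ _)) hnN
    have hnN' : N' ≤ n := le_trans (le_trans (le_max_right N N') (le_max_left _ _)) hnN
    have hnN0 : N0 ≤ n := le_trans (le_trans (le_max_left N0 1) (le_max_right _ _)) hnN
    set y : ℝ := m (n+1) with hy
    have hypos : 0 < y := hmpos _
    have hyx : y ≤ x := by
      rw [hy, hm]
      exact (inv_le_comm₀ hx0' (by positivity)).mp hn2.le
    have hxub : x ≤ m n := by
      rw [hm]
      exact (le_inv_comm₀ hx0' (by positivity)).mpr hn1
    have hyx0 : y ≤ x0 := le_trans (hmanti (by omega : N0 ≤ n+1)) (hN0 N0 le_rfl).le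
    have hx1 : x ≤ 1 := hx.2.le
    -- positivity of slope at y
    have hsy : 0 < g y / y := hposs y hypos hyx0
    -- slope comparison
    have hslope : g x / x ≤ g y / y := slope_le hconc h0 hypos hyx hx1
    -- log bounds
    have hlogk : 0 < Real.log k := Real.log_pos hk1
    have hlogx : (n:ℝ) * Real.log k ≤ -Real.log x := by
      have : Real.log ((k:ℝ)^n) ≤ Real.log x⁻¹ :=
        Real.log_le_log (by positivity) hn1
      rwa [Real.log_pow, Real.log_inv] at this
    have hlogxpos : (0:ℝ) < -Real.log x := by
      have : (0:ℝ) < (n:ℝ) * Real.log k := by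
        apply mul_pos _ hlogk
        exact_mod_cast hnN1
      linarith
    -- the sequence bound at n+1
    have hry : g y / eta y < c' := by
      have h2x : ((g y / eta y : ℝ) : EReal) < (c' : EReal) := hN (n+1) (by omega)
      exact_mod_cast h2x
    have hlogy : -Real.log y = ((n:ℝ)+1) * Real.log k := by
      rw [hy, hm, Real.log_inv, neg_neg, Real.log_pow]
      push_cast; ring
    have hry' : g y / y < c' * (((n:ℝ)+1) * Real.log k) := by
      rw [ratio_eq hypos, hlogy] at hry
      have hpos : (0:ℝ) < ((n:ℝ)+1) * Real.log k := by positivity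
      calc g y / y = (g y / y) / (((n:ℝ)+1) * Real.log k) * (((n:ℝ)+1) * Real.log k) := by
            field_simp
        _ < c' * (((n:ℝ)+1) * Real.log k) := by
            exact mul_lt_mul_of_pos_right hry hpos
    -- main real bound
    have hnpos : (0:ℝ) < (n:ℝ) := by exact_mod_cast hnN1
    have hmain : g x / eta x ≤ c'' := by
      rw [ratio_eq hx0']
      have hnlk : (0:ℝ) < (n:ℝ) * Real.log k := by positivity
      have step1 : (g x / x) / (-Real.log x) ≤ (g y / y) / (-Real.log x) := by
        gcongr
      have step2 : (g y / y) / (-Real.log x) ≤ (g y / y) / ((n:ℝ) * Real.log k) := by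
        gcongr

      have step3 : (g y / y) / ((n:ℝ) * Real.log k)
          ≤ (c' * (((n:ℝ)+1) * Real.log k)) / ((n:ℝ) * Real.log k) := by
        gcongr

      have step4 : c' * (((n:ℝ)+1) * Real.log k) / ((n:ℝ) * Real.log k) ≤ c'' := by
        rw [show c' * (((n:ℝ)+1) * Real.log k) / ((n:ℝ) * Real.log k)
            = c' * ((n:ℝ)+1) / n from by field_simp]
        rw [div_le_iff₀ hnpos]
        have hceil : c' / (c'' - c') ≤ (N' : ℝ) := by
          have := Nat.le_ceil (c' / (c'' - c'))
          have : (⌈c' / (c'' - c')⌉₊ : ℝ) ≤ (N' : ℝ) := by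
            rw [hN']; push_cast; linarith
          linarith [Nat.le_ceil (c' / (c'' - c'))]
        have hNn : (N' : ℝ) ≤ n := by exact_mod_cast hnN'
        have hd : (0:ℝ) < c'' - c' := by linarith
        have hfin : c' ≤ (c''-c') * (n:ℝ) := by
          have h5 : c'/(c''-c') ≤ (n:ℝ) := le_trans hceil hNn
          calc c' = (c'/(c''-c')) * (c''-c') := by field_simp
            _ ≤ (n:ℝ) * (c''-c') := mul_le_mul_of_nonneg_right h5 hd.le
            _ = (c''-c') * n := by ring
        nlinarith
      linarith [step1, step2, step3, step4]
    -- conclude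
    have hfx : f x ≤ (c'' : EReal) := by
      show ((g x / eta x : ℝ) : EReal) ≤ (c'' : EReal)
      exact_mod_cast hmain
    exact le_trans hfx hc''2.le
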